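/- arXiv:1704.08195 — 2 statements merged into one kernel-verified Lean document; each statement's English description precedes it below -/
import Mathlib

section
/- The union over s > 0 of the balls E_s = B((1-s)y, r(s)), with r(s) = sqrt(s(1-|y|²) + s²|y|²), equals the open half-space {x ∈ ℝⁿ : ⟨x,y⟩ < (1+|y|²)/2}. -/
open scoped RealInnerProductSpace

lemma expand_aux {n : ℕ} (x y : EuclideanSpace ℝ (Fin n)) (c : ℝ) :
    ‖x - c • y‖ ^ 2 = ‖x‖ ^ 2 - 2 * c * ⟪x, y⟫ + c ^ 2 * ‖y‖ ^ 2 := by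
  rw [norm_sub_sq_real, real_inner_smul_right, norm_smul, mul_pow, Real.norm_eq_abs, sq_abs]
  ring

theorem stmt_7 (n : ℕ) (y : EuclideanSpace ℝ (Fin n)) (hy : ‖y‖ < 1)
    (r : ℝ → ℝ) (hr : ∀ s, r s = Real.sqrt (s * (1 - ‖y‖ ^ 2) + s ^ 2 * ‖y‖ ^ 2))
    (E : ℝ → Set (EuclideanSpace ℝ (Fin n)))
    (hE : ∀ s, E s = Metric.ball ((1 - s) • y) (r s)) :
    (⋃ s ∈ Set.Ioi (0 : ℝ), E s)
      = {x : EuclideanSpace ℝ (Fin n) | ⟪x, y⟫ < (1 + ‖y‖ ^ 2) / 2} := by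
  have hy0 := norm_nonneg y
  ext x
  simp only [hE, hr, Set.mem_iUnion, Metric.mem_ball, Set.mem_setOf_eq, Set.mem_Ioi,
    dist_eq_norm]
  have hD : 0 ≤ ‖x‖ ^ 2 - 2 * ⟪x, y⟫ + ‖y‖ ^ 2 := by
    nlinarith [real_inner_le_norm x y, sq_nonneg (‖x‖ - ‖y‖)]
  constructor
  · rintro ⟨s, hs, hx⟩
    rw [Real.lt_sqrt (norm_nonneg _), expand_aux] at hx
    by_contra hcon
    push_neg at hcon
    nlinarith [mul_nonneg hs.le (by linarith : (0:ℝ) ≤ 2 * ⟪x, y⟫ - 1 - ‖y‖ ^ 2)]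
  · intro h
    set c : ℝ := 1 + ‖y‖ ^ 2 - 2 * ⟪x, y⟫ with hc
    have hcpos : 0 < c := by simp only [hc]; linarith
    set D : ℝ := ‖x‖ ^ 2 - 2 * ⟪x, y⟫ + ‖y‖ ^ 2 with hDdef
    refine ⟨(D + 1) / c, by positivity, ?_⟩
    rw [Real.lt_sqrt (norm_nonneg _), expand_aux]
    have hsc : (D + 1) / c * c = D + 1 := by field_simp
    nlinarith [sq_nonneg ((D + 1) / c)]
end

section
/- Let q ≥ 1 and y ∈ ℝᵐ with q|y|² < 1. On the open set where f_q is smooth and positive, the gradient of f_q (the function whose level set {f_q = s} is the sphere |x - sy|² = s(1-q|y|²)+s²q|y|²) satisfies ∇f_q(x)/2 = f_q(x)·(x - f_q(x)y)/(|x|² + (q-1)f_q(x)²|y|²), and consequently |∇f_q(x)| = 2 f_q(x) R_q(f_q(x))/(|x|² + (q-1)f_q(x)²|y|²), where R_q(s) = sqrt(s(1-q|y|²)+s²q|y|²). -/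
open scoped RealInnerProductSpace

set_option maxHeartbeats 1000000 in
theorem stmt_15 (m : ℕ) (hm : 1 ≤ m) (q : ℝ) (hq : 1 ≤ q)
    (y : EuclideanSpace ℝ (Fin m)) (hy : q * ‖y‖ ^ 2 < 1)
    (U : Set (EuclideanSpace ℝ (Fin m))) (hU : IsOpen U)
    (f : EuclideanSpace ℝ (Fin m) → ℝ)
    (hfsmooth : ContDiffOn ℝ 1 f U) (hfpos : ∀ x ∈ U, 0 < f x)
    (hlevel : ∀ x ∈ U,
      ‖x - f x • y‖ ^ 2 = f x * (1 - q * ‖y‖ ^ 2) + (f x) ^ 2 * q * ‖y‖ ^ 2)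
    (R : ℝ → ℝ) (hR : ∀ s, R s = Real.sqrt (s * (1 - q * ‖y‖ ^ 2) + s ^ 2 * q * ‖y‖ ^ 2))
    (x : EuclideanSpace ℝ (Fin m)) (hx : x ∈ U) :
    (1 / 2 : ℝ) • gradient f x
        = (f x / (‖x‖ ^ 2 + (q - 1) * (f x) ^ 2 * ‖y‖ ^ 2)) • (x - f x • y) ∧
      ‖gradient f x‖
        = 2 * f x * R (f x) / (‖x‖ ^ 2 + (q - 1) * (f x) ^ 2 * ‖y‖ ^ 2) := by
  have hxU : U ∈ nhds x := hU.mem_nhds hx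
  have hdf : DifferentiableAt ℝ f x :=
    (hfsmooth.contDiffAt hxU).differentiableAt one_ne_zero
  set φ := fderiv ℝ f x with hφ
  have hFpos : 0 < f x := hfpos x hx
  -- derivative of z ↦ z - f z • y
  have hw' : HasFDerivAt (fun z => z - f z • y)
      (ContinuousLinearMap.id ℝ _ - φ.smulRight y) x :=
    (hasFDerivAt_id x).sub (hdf.hasFDerivAt.smul_const y)
  have h1 := (hw'.inner ℝ hw')
  have h2 : HasFDerivAt (fun z => f z * (1 - q * ‖y‖ ^ 2) + (f z) ^ 2 * q * ‖y‖ ^ 2)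
      ((1 - q * ‖y‖ ^ 2) • φ + (2 * f x * (q * ‖y‖ ^ 2)) • φ) x := by
    have ha : HasFDerivAt (fun z => f z * (1 - q * ‖y‖ ^ 2)) ((1 - q * ‖y‖ ^ 2) • φ) x := by
      simpa [mul_comm] using hdf.hasFDerivAt.mul_const (1 - q * ‖y‖ ^ 2)
    have hb : HasFDerivAt (fun z => (f z) ^ 2 * q * ‖y‖ ^ 2)
        ((2 * f x * (q * ‖y‖ ^ 2)) • φ) x := by
      have := (hdf.hasFDerivAt.mul hdf.hasFDerivAt).mul_const (q * ‖y‖ ^ 2)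
      refine this.congr_fderiv ?_ |>.congr_of_eventuallyEq ?_
      · ext v
        simp
        ring
      · filter_upwards with z
        simp only [Pi.mul_apply]
        ring
    exact ha.add hb
  have hg : HasFDerivAt (fun z => ⟪z - f z • y, z - f z • y⟫ -
      (f z * (1 - q * ‖y‖ ^ 2) + (f z) ^ 2 * q * ‖y‖ ^ 2)) (_ - _) x := h1.sub h2
  have hzero : (fun z => ⟪z - f z • y, z - f z • y⟫ -
      (f z * (1 - q * ‖y‖ ^ 2) + (f z) ^ 2 * q * ‖y‖ ^ 2)) =ᶠ[nhds x] fun _ => (0:ℝ) := by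
    filter_upwards [hxU] with z hz
    have := hlevel z hz
    rw [real_inner_self_eq_norm_sq]
    linarith
  have hfd0 : HasFDerivAt (fun _ : EuclideanSpace ℝ (Fin m) => (0:ℝ))
      (0 : EuclideanSpace ℝ (Fin m) →L[ℝ] ℝ) x := hasFDerivAt_const (0:ℝ) x
  have hder0 := (hg.congr_of_eventuallyEq hzero.symm).unique hfd0
  have key : ∀ v, φ v * ((1 - q * ‖y‖ ^ 2) + 2 * f x * (q * ‖y‖ ^ 2)
      + 2 * ⟪x - f x • y, y⟫) = 2 * ⟪x - f x • y, v⟫ := by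
    intro v
    have h := congrFun (congrArg DFunLike.coe hder0) v
    simp only [ContinuousLinearMap.coe_sub', ContinuousLinearMap.coe_comp',
      Function.comp_apply, ContinuousLinearMap.prod_apply, ContinuousLinearMap.sub_apply,
      ContinuousLinearMap.add_apply, ContinuousLinearMap.coe_smul', Pi.smul_apply,
      ContinuousLinearMap.id_apply, ContinuousLinearMap.smulRight_apply,
      fderivInnerCLM_apply, Pi.sub_apply, Pi.add_apply, ContinuousLinearMap.zero_apply,
      inner_sub_right, inner_sub_left, real_inner_smul_right, real_inner_smul_left,
      smul_eq_mul, real_inner_self_eq_norm_sq] at h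
    rw [inner_sub_left, inner_sub_left, real_inner_smul_left, real_inner_smul_left,
      real_inner_self_eq_norm_sq]
    linear_combination -h - φ v * real_inner_comm x y - real_inner_comm v x
      - f x * real_inner_comm y v
  -- abbreviations
  set w : EuclideanSpace ℝ (Fin m) := x - f x • y with hwdef
  set B : ℝ := (1 - q * ‖y‖ ^ 2) + 2 * f x * (q * ‖y‖ ^ 2) + 2 * ⟪w, y⟫ with hBdef
  set D : ℝ := ‖x‖ ^ 2 + (q - 1) * (f x) ^ 2 * ‖y‖ ^ 2 with hDdef
  -- expanded level equation at x
  have hlev : ‖x‖ ^ 2 - 2 * (f x) * ⟪x, y⟫ + (f x) ^ 2 * ‖y‖ ^ 2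
      = f x * (1 - q * ‖y‖ ^ 2) + (f x) ^ 2 * q * ‖y‖ ^ 2 := by
    have h := hlevel x hx
    rw [norm_sub_sq_real, real_inner_smul_right, norm_smul, mul_pow, Real.norm_eq_abs,
      sq_abs] at h
    linarith
  have hwy : ⟪w, y⟫ = ⟪x, y⟫ - f x * ‖y‖ ^ 2 := by
    rw [hwdef, inner_sub_left, real_inner_smul_left, real_inner_self_eq_norm_sq]
  have hFB : f x * B = D := by
    rw [hBdef, hDdef, hwy]
    linear_combination -hlev
  have hx0 : x ≠ 0 := by
    rintro rfl
    rw [norm_zero, inner_zero_left] at hlev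
    nlinarith [mul_pos hFpos (show (0:ℝ) < 1 - q * ‖y‖ ^ 2 by linarith),
      mul_nonneg (mul_nonneg (sub_nonneg.mpr hq) (sq_nonneg (f 0))) (sq_nonneg ‖y‖)]
  have hD : 0 < D := by
    rw [hDdef]
    have h1 : 0 < ‖x‖ ^ 2 := pow_pos (norm_pos_iff.mpr hx0) 2
    have h2 : 0 ≤ (q - 1) * (f x) ^ 2 * ‖y‖ ^ 2 := by
      apply mul_nonneg (mul_nonneg (by linarith) (sq_nonneg _)) (sq_nonneg _)
    linarith
  have hB : 0 < B := by
    have hfB : 0 < f x * B := by rw [hFB]; exact hD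
    rcases mul_pos_iff.mp hfB with ⟨_, h⟩ | ⟨h, _⟩
    · exact h
    · linarith
  -- gradient and fderiv
  have hgrad : ∀ v, ⟪gradient f x, v⟫ = φ v := by
    intro v
    have h1 : HasFDerivAt f (InnerProductSpace.toDual ℝ _ (gradient f x)) x :=
      hasGradientAt_iff_hasFDerivAt.mp hdf.hasGradientAt
    have h2 := h1.unique hdf.hasFDerivAt
    rw [← InnerProductSpace.toDual_apply_apply, h2, hφ]
  have hmain : gradient f x = (2 / B) • w := by
    apply ext_inner_right ℝ
    intro v
    rw [hgrad v, real_inner_smul_left, div_mul_eq_mul_div, eq_div_iff hB.ne']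
    linarith [key v]
  constructor
  · rw [hmain, smul_smul]
    congr 1
    rw [← hFB]
    field_simp
  · have hRw : R (f x) = ‖w‖ := by
      rw [hR, ← hlevel x hx, Real.sqrt_sq (norm_nonneg _)]
    rw [hmain, norm_smul, Real.norm_eq_abs, abs_of_pos (by positivity), hRw, ← hFB]
    field_simp
end
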